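/- For every positive integer n, the function u_n(x) := 2π·Σ_{k=1}^n sin(2kπx) satisfies μ₀(u_n) = 0, μ₁(u_n) = Σ_{k=1}^n 1/k, and ‖Pu_n‖²_{L²(0,1)} = (1/2)·Σ_{k=1}^n 1/k². In particular (‖Pu_n‖²_{L²} + |μ₀(u_n)|²)^{1/2} is bounded uniformly in n while μ₁(u_n) → ∞. -/

import Mathlib

open MeasureTheory intervalIntegral Filter

/-- `𝓘g(x) = ∫₀ˣ g(y) dy` -/
noncomputable def Iprim (g : ℝ → ℂ) (x : ℝ) : ℂ := ∫ y in (0:ℝ)..x, g y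

/-- `Pg(x) = 𝓘g(x) − ∫₀¹ 𝓘g(z) dz` -/
noncomputable def Pfun (g : ℝ → ℂ) (x : ℝ) : ℂ := Iprim g x - ∫ z in (0:ℝ)..1, Iprim g z

/-- `μ₀(g) = ∫₀¹ g(x) dx` -/
noncomputable def mu0 (g : ℝ → ℂ) : ℂ := ∫ x in (0:ℝ)..1, g x

/-- `μ₁(g) = ∫₀¹ (1−x) g(x) dx` -/
noncomputable def mu1 (g : ℝ → ℂ) : ℂ := ∫ x in (0:ℝ)..1, ((1 - x : ℝ) : ℂ) * g x

/-- `u_n(x) = 2π Σ_{k=1}^n sin(2kπx)` -/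
noncomputable def uSeq (n : ℕ) (x : ℝ) : ℂ :=
  ((2 * Real.pi * ∑ k ∈ Finset.Icc 1 n, Real.sin (2 * (k:ℝ) * Real.pi * x) : ℝ) : ℂ)


section Stmt6Helpers

local notation "π" => Real.pi

lemma csin (c : ℝ) : Continuous (fun x : ℝ => Real.sin (c * x)) := by fun_prop
lemma ccos (c : ℝ) : Continuous (fun x : ℝ => Real.cos (c * x)) := by fun_prop

lemma int_sin_c {c : ℝ} (hc : c ≠ 0) (b : ℝ) :
    ∫ x in (0:ℝ)..b, Real.sin (c * x) = (1 - Real.cos (c * b)) / c := by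
  rw [intervalIntegral.integral_comp_mul_left Real.sin hc, mul_zero, integral_sin]
  simp [smul_eq_mul]
  ring

lemma int_cos_c {c : ℝ} (hc : c ≠ 0) (b : ℝ) :
    ∫ x in (0:ℝ)..b, Real.cos (c * x) = Real.sin (c * b) / c := by
  rw [intervalIntegral.integral_comp_mul_left Real.cos hc, mul_zero, integral_cos]
  simp [smul_eq_mul]
  ring

lemma int_x_sin {c : ℝ} (hc : c ≠ 0) :
    ∫ x in (0:ℝ)..1, x * Real.sin (c * x)
      = -Real.cos c / c + Real.sin c / c ^ 2 := by
  have hv : ∀ x ∈ Set.uIcc (0:ℝ) 1, HasDerivAt (fun x => -Real.cos (c * x) / c)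
      (Real.sin (c * x)) x := by
    intro x _
    have h1 : HasDerivAt (fun x : ℝ => c * x) c x := by
      simpa using (hasDerivAt_id x).const_mul c
    have h2 := (Real.hasDerivAt_cos (c * x)).comp x h1
    have h3 := (h2.neg).div_const c
    rw [neg_mul, neg_neg, mul_div_assoc, div_self hc, mul_one] at h3
    exact h3
  have hu : ∀ x ∈ Set.uIcc (0:ℝ) 1, HasDerivAt (fun x : ℝ => x) (1:ℝ) x :=
    fun x _ => hasDerivAt_id x
  have := intervalIntegral.integral_mul_deriv_eq_deriv_mul hu hv
    (intervalIntegrable_const)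
    ((csin c).intervalIntegrable _ _)
  rw [this]
  have : ∫ x in (0:ℝ)..1, 1 * (-Real.cos (c * x) / c)
      = (-(Real.sin (c*1) / c)) / c := by
    simp_rw [one_mul, neg_div, div_div]
    rw [intervalIntegral.integral_neg, intervalIntegral.integral_div, int_cos_c hc 1, div_div]
  rw [this]
  field_simp
  ring

lemma two_k_pi_ne {k : ℕ} (hk : 1 ≤ k) : 2 * (k:ℝ) * π ≠ 0 := by
  have : (k:ℝ) ≠ 0 := Nat.cast_ne_zero.mpr (by omega)
  positivity

lemma cos_2kpi (k : ℕ) : Real.cos (2 * (k:ℝ) * π) = 1 := by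
  have := Real.cos_int_mul_two_pi (k : ℤ)
  push_cast at this ⊢
  rw [show 2 * (k:ℝ) * π = (k:ℝ) * (2 * π) by ring]
  exact this

lemma sin_2kpi (k : ℕ) : Real.sin (2 * (k:ℝ) * π) = 0 := by
  have := Real.sin_int_mul_pi ((2*k : ℕ) : ℤ)
  push_cast at this ⊢
  rw [show 2 * (k:ℝ) * π = (2*(k:ℝ)) * π by ring]
  exact this

lemma int_sin_k {k : ℕ} (hk : 1 ≤ k) :
    ∫ x in (0:ℝ)..1, Real.sin (2 * (k:ℝ) * π * x) = 0 := by
  rw [int_sin_c (two_k_pi_ne hk) 1, mul_one, cos_2kpi]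
  simp

lemma int_cos_k {k : ℕ} (hk : 1 ≤ k) :
    ∫ x in (0:ℝ)..1, Real.cos (2 * (k:ℝ) * π * x) = 0 := by
  rw [int_cos_c (two_k_pi_ne hk) 1, mul_one, sin_2kpi]
  simp

lemma int_cos_int (m : ℤ) :
    ∫ x in (0:ℝ)..1, Real.cos (2 * (m:ℝ) * π * x) = if m = 0 then 1 else 0 := by
  by_cases hm : m = 0
  · simp [hm]
  · have hc : 2 * (m:ℝ) * π ≠ 0 := by
      have : (m:ℝ) ≠ 0 := Int.cast_ne_zero.mpr hm
      have := Real.pi_ne_zero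
      positivity
    rw [int_cos_c hc 1, mul_one, if_neg hm]
    have : Real.sin (2 * (m:ℝ) * π) = 0 := by
      have := Real.sin_int_mul_pi (2*m)
      push_cast at this ⊢
      rw [show 2 * (m:ℝ) * π = (2*(m:ℝ)) * π by ring]
      exact this
    rw [this, zero_div]

lemma cos_orth {j k : ℕ} (hj : 1 ≤ j) (hk : 1 ≤ k) :
    ∫ x in (0:ℝ)..1, Real.cos (2*(j:ℝ)*π*x) * Real.cos (2*(k:ℝ)*π*x)
      = if j = k then 1/2 else 0 := by
  have hprod : ∀ x : ℝ, Real.cos (2*(j:ℝ)*π*x) * Real.cos (2*(k:ℝ)*π*x)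
      = (Real.cos (2*(((j:ℤ)-k : ℤ):ℝ)*π*x) + Real.cos (2*(((j:ℤ)+k : ℤ):ℝ)*π*x)) / 2 := by
    intro x
    have h1 := Real.cos_sub (2*(j:ℝ)*π*x) (2*(k:ℝ)*π*x)
    have h2 := Real.cos_add (2*(j:ℝ)*π*x) (2*(k:ℝ)*π*x)
    have e1 : 2*(j:ℝ)*π*x - 2*(k:ℝ)*π*x = 2*(((j:ℤ)-k : ℤ):ℝ)*π*x := by push_cast; ring
    have e2 : 2*(j:ℝ)*π*x + 2*(k:ℝ)*π*x = 2*(((j:ℤ)+k : ℤ):ℝ)*π*x := by push_cast; ring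
    rw [e1] at h1; rw [e2] at h2; linarith
  rw [intervalIntegral.integral_congr (g := fun x =>
      (Real.cos (2*(((j:ℤ)-k : ℤ):ℝ)*π*x) + Real.cos (2*(((j:ℤ)+k : ℤ):ℝ)*π*x)) / 2)
      (fun x _ => hprod x)]
  rw [intervalIntegral.integral_div,
    intervalIntegral.integral_add ((ccos _).intervalIntegrable _ _)
      ((ccos _).intervalIntegrable _ _)]
  rw [int_cos_int ((j:ℤ)-k), int_cos_int ((j:ℤ)+k)]
  have hjk : ¬ ((j:ℤ)+k = 0) := by omega
  rw [if_neg hjk]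
  by_cases h : j = k
  · rw [if_pos (by omega), if_pos h]; norm_num
  · rw [if_neg (by omega), if_neg h]; norm_num
lemma mu0_uSeq (n : ℕ) : mu0 (uSeq n) = 0 := by
  unfold mu0 uSeq
  rw [intervalIntegral.integral_ofReal]
  have hpt : ∀ y : ℝ, 2 * π * ∑ k ∈ Finset.Icc 1 n, Real.sin (2 * (k:ℝ) * π * y)
      = ∑ k ∈ Finset.Icc 1 n, 2 * π * Real.sin (2 * (k:ℝ) * π * y) := by
    intro y; rw [Finset.mul_sum]
  rw [intervalIntegral.integral_congr (g := fun y =>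
      ∑ k ∈ Finset.Icc 1 n, 2 * π * Real.sin (2 * (k:ℝ) * π * y)) (fun y _ => hpt y)]
  rw [intervalIntegral.integral_finset_sum (f := fun (k : ℕ) (x : ℝ) => 2 * π * Real.sin (2 * (k:ℝ) * π * x)) (fun k _ =>
      ((continuous_const.mul (csin (2*(k:ℝ)*π))).intervalIntegrable _ _))]
  have : ∀ k ∈ Finset.Icc 1 n,
      ∫ x in (0:ℝ)..1, 2 * π * Real.sin (2 * (k:ℝ) * π * x) = 0 := by
    intro k hk
    rw [intervalIntegral.integral_const_mul, int_sin_k (Finset.mem_Icc.mp hk).1, mul_zero]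
  rw [Finset.sum_congr rfl this]
  simp

lemma Iprim_uSeq (n : ℕ) (x : ℝ) :
    Iprim (uSeq n) x
      = ((∑ k ∈ Finset.Icc 1 n, (1 - Real.cos (2*(k:ℝ)*π*x)) / (k:ℝ) : ℝ) : ℂ) := by
  unfold Iprim uSeq
  rw [intervalIntegral.integral_ofReal]
  congr 1
  have hpt : ∀ y : ℝ, 2 * π * ∑ k ∈ Finset.Icc 1 n, Real.sin (2 * (k:ℝ) * π * y)
      = ∑ k ∈ Finset.Icc 1 n, 2 * π * Real.sin (2 * (k:ℝ) * π * y) := by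
    intro y; rw [Finset.mul_sum]
  rw [intervalIntegral.integral_congr (g := fun y =>
      ∑ k ∈ Finset.Icc 1 n, 2 * π * Real.sin (2 * (k:ℝ) * π * y)) (fun y _ => hpt y)]
  rw [intervalIntegral.integral_finset_sum (f := fun (k : ℕ) (x : ℝ) => 2 * π * Real.sin (2 * (k:ℝ) * π * x)) (fun k _ =>
      ((continuous_const.mul (csin (2*(k:ℝ)*π))).intervalIntegrable _ _))]
  refine Finset.sum_congr rfl (fun k hk => ?_)
  have hk1 : 1 ≤ k := (Finset.mem_Icc.mp hk).1
  rw [intervalIntegral.integral_const_mul, int_sin_c (two_k_pi_ne hk1) x]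
  have hkR : (k:ℝ) ≠ 0 := Nat.cast_ne_zero.mpr (by omega)
  field_simp

lemma intIprim_uSeq (n : ℕ) :
    (∫ z in (0:ℝ)..1, Iprim (uSeq n) z)
      = ((∑ k ∈ Finset.Icc 1 n, (1:ℝ)/(k:ℝ) : ℝ) : ℂ) := by
  have hpt : ∀ z : ℝ, Iprim (uSeq n) z
      = ((∑ k ∈ Finset.Icc 1 n, (1 - Real.cos (2*(k:ℝ)*π*z)) / (k:ℝ) : ℝ) : ℂ) :=
    Iprim_uSeq n
  rw [intervalIntegral.integral_congr (fun z _ => hpt z), intervalIntegral.integral_ofReal]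
  congr 1
  rw [intervalIntegral.integral_finset_sum (f := fun (k : ℕ) (z : ℝ) =>
      (1 - Real.cos (2*(k:ℝ)*π*z)) / (k:ℝ)) (fun k _ =>
      (((continuous_const.sub (ccos (2*(k:ℝ)*π))).div_const _).intervalIntegrable _ _))]
  refine Finset.sum_congr rfl (fun k hk => ?_)
  have hk1 : 1 ≤ k := (Finset.mem_Icc.mp hk).1
  have : ∫ z in (0:ℝ)..1, (1 - Real.cos (2*(k:ℝ)*π*z)) / (k:ℝ)
      = (∫ z in (0:ℝ)..1, (1 - Real.cos (2*(k:ℝ)*π*z))) / (k:ℝ) :=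
    intervalIntegral.integral_div _ _
  rw [this, intervalIntegral.integral_sub (intervalIntegrable_const)
      ((ccos (2*(k:ℝ)*π)).intervalIntegrable _ _), int_cos_k hk1]
  simp

lemma Pfun_uSeq (n : ℕ) (x : ℝ) :
    Pfun (uSeq n) x
      = ((-∑ k ∈ Finset.Icc 1 n, Real.cos (2*(k:ℝ)*π*x) / (k:ℝ) : ℝ) : ℂ) := by
  unfold Pfun
  rw [Iprim_uSeq, intIprim_uSeq]
  rw [← Complex.ofReal_sub]
  congr 1
  rw [← Finset.sum_sub_distrib, ← Finset.sum_neg_distrib]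
  exact Finset.sum_congr rfl (fun k hk => by ring)

lemma L2_uSeq (n : ℕ) :
    (∫ x in (0:ℝ)..1, ‖Pfun (uSeq n) x‖ ^ 2)
      = (1/2) * ∑ k ∈ Finset.Icc 1 n, (1:ℝ)/(k:ℝ)^2 := by
  have hpt : ∀ x : ℝ, ‖Pfun (uSeq n) x‖ ^ 2
      = ∑ j ∈ Finset.Icc 1 n, ∑ k ∈ Finset.Icc 1 n,
          (Real.cos (2*(j:ℝ)*π*x) * Real.cos (2*(k:ℝ)*π*x)) / ((j:ℝ) * k) := by
    intro x
    rw [Pfun_uSeq, Complex.norm_real, Real.norm_eq_abs, sq_abs, neg_sq, sq, Finset.sum_mul_sum]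
    refine Finset.sum_congr rfl (fun j _ => Finset.sum_congr rfl (fun k _ => by ring))
  rw [intervalIntegral.integral_congr (fun x _ => hpt x)]
  rw [intervalIntegral.integral_finset_sum (f := fun (j : ℕ) (x : ℝ) =>
      ∑ k ∈ Finset.Icc 1 n, (Real.cos (2*(j:ℝ)*π*x) * Real.cos (2*(k:ℝ)*π*x)) / ((j:ℝ)*k))
      (fun j _ => ?_)]
  swap
  · apply Continuous.intervalIntegrable
    exact continuous_finset_sum _ (fun k _ => (((ccos _).mul (ccos _)).div_const _))
  have hj : ∀ j ∈ Finset.Icc 1 n,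
      (∫ x in (0:ℝ)..1, ∑ k ∈ Finset.Icc 1 n,
        (Real.cos (2*(j:ℝ)*π*x) * Real.cos (2*(k:ℝ)*π*x)) / ((j:ℝ)*k))
      = (1/2) * (1/(j:ℝ)^2) := by
    intro j hj
    have hj1 : 1 ≤ j := (Finset.mem_Icc.mp hj).1
    rw [intervalIntegral.integral_finset_sum (f := fun (k : ℕ) (x : ℝ) =>
        (Real.cos (2*(j:ℝ)*π*x) * Real.cos (2*(k:ℝ)*π*x)) / ((j:ℝ)*k))
        (fun k _ => (((ccos _).mul (ccos _)).div_const _).intervalIntegrable _ _)]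
    have hterm : ∀ k ∈ Finset.Icc 1 n,
        (∫ x in (0:ℝ)..1, (Real.cos (2*(j:ℝ)*π*x) * Real.cos (2*(k:ℝ)*π*x)) / ((j:ℝ)*k))
        = if j = k then (1/2) * (1/(j:ℝ)^2) else 0 := by
      intro k hk
      have hk1 : 1 ≤ k := (Finset.mem_Icc.mp hk).1
      rw [intervalIntegral.integral_div, cos_orth hj1 hk1]
      by_cases h : j = k
      · subst h
        rw [if_pos rfl, if_pos rfl]
        have : (j:ℝ) ≠ 0 := Nat.cast_ne_zero.mpr (by omega)
        field_simp
      · rw [if_neg h, if_neg h, zero_div]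
    rw [Finset.sum_congr rfl hterm,
      Finset.sum_ite_eq (Finset.Icc 1 n) j (fun _ => (1/2) * (1/(j:ℝ)^2)), if_pos hj]
  rw [Finset.sum_congr rfl hj, ← Finset.mul_sum]

lemma mu1_uSeq (n : ℕ) :
    mu1 (uSeq n) = ((∑ k ∈ Finset.Icc 1 n, (1:ℝ)/(k:ℝ) : ℝ) : ℂ) := by
  unfold mu1 uSeq
  have hpt : ∀ x : ℝ, ((1 - x : ℝ) : ℂ) *
      ((2 * π * ∑ k ∈ Finset.Icc 1 n, Real.sin (2 * (k:ℝ) * π * x) : ℝ) : ℂ)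
      = (((∑ k ∈ Finset.Icc 1 n,
          (2 * π * Real.sin (2*(k:ℝ)*π*x) - 2 * π * (x * Real.sin (2*(k:ℝ)*π*x))) : ℝ)) : ℂ) := by
    intro x
    rw [← Complex.ofReal_mul]
    congr 1
    rw [Finset.mul_sum, Finset.mul_sum]
    refine Finset.sum_congr rfl (fun k _ => by ring)
  rw [intervalIntegral.integral_congr (fun x _ => hpt x), intervalIntegral.integral_ofReal]
  congr 1
  rw [intervalIntegral.integral_finset_sum (f := fun (k : ℕ) (x : ℝ) =>
      2 * π * Real.sin (2*(k:ℝ)*π*x) - 2 * π * (x * Real.sin (2*(k:ℝ)*π*x)))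
      (fun k _ => Continuous.intervalIntegrable (by fun_prop) _ _)]
  refine Finset.sum_congr rfl (fun k hk => ?_)
  have hk1 : 1 ≤ k := (Finset.mem_Icc.mp hk).1
  have hc := two_k_pi_ne hk1
  rw [intervalIntegral.integral_sub
      (Continuous.intervalIntegrable (by fun_prop) _ _)
      (Continuous.intervalIntegrable (by fun_prop) _ _),
    intervalIntegral.integral_const_mul, intervalIntegral.integral_const_mul,
    int_sin_k hk1, int_x_sin hc, cos_2kpi, sin_2kpi]
  have hkR : (k:ℝ) ≠ 0 := Nat.cast_ne_zero.mpr (by omega)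
  have hπ := Real.pi_ne_zero
  field_simp
  ring

lemma sum_inv_sq_le (n : ℕ) : ∑ k ∈ Finset.Icc 1 n, (1:ℝ)/(k:ℝ)^2 ≤ 2 := by
  have H : ∀ m : ℕ, ∑ k ∈ Finset.Icc 1 m, (1:ℝ)/(k:ℝ)^2 ≤ 2 - 1/(m:ℝ) := by
    intro m
    induction m with
    | zero => simp
    | succ m ih =>
      rw [Finset.sum_Icc_succ_top (by omega)]
      rcases Nat.eq_zero_or_pos m with hm | hm
      · subst hm; norm_num
      · have hmR : (1:ℝ) ≤ (m:ℝ) := by exact_mod_cast hm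
        have key : (1:ℝ)/((m:ℝ)+1)^2 ≤ 1/(m:ℝ) - 1/((m:ℝ)+1) := by
          rw [div_sub_div _ _ (by positivity) (by positivity),
            div_le_div_iff₀ (by positivity) (by positivity)]
          nlinarith
        push_cast
        linarith
  have := H n
  have h0 : (0:ℝ) ≤ 1/(n:ℝ) := by positivity
  linarith


end Stmt6Helpers

/-- For every positive integer `n`: `μ₀(u_n) = 0`, `μ₁(u_n) = Σ_{k=1}^n 1/k`, and
`‖Pu_n‖²_{L²} = (1/2) Σ_{k=1}^n 1/k²`. In particular `(‖Pu_n‖² + |μ₀(u_n)|²)^{1/2}` is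
uniformly bounded while `μ₁(u_n) → ∞`. -/
theorem stmt6 :
    (∀ n : ℕ, 1 ≤ n →
      mu0 (uSeq n) = 0 ∧
      mu1 (uSeq n) = ((∑ k ∈ Finset.Icc 1 n, (1:ℝ)/(k:ℝ)) : ℝ) ∧
      (∫ x in (0:ℝ)..1, ‖Pfun (uSeq n) x‖ ^ 2) = (1/2) * ∑ k ∈ Finset.Icc 1 n, (1:ℝ)/(k:ℝ)^2) ∧
    (∃ M : ℝ, ∀ n : ℕ,
      ((∫ x in (0:ℝ)..1, ‖Pfun (uSeq n) x‖ ^ 2) + ‖mu0 (uSeq n)‖ ^ 2) ^ ((1:ℝ)/2) ≤ M) ∧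
    Tendsto (fun n : ℕ => ‖mu1 (uSeq n)‖) atTop atTop := by
  refine ⟨fun n _ => ⟨mu0_uSeq n, mu1_uSeq n, L2_uSeq n⟩, ⟨1, fun n => ?_⟩, ?_⟩
  · rw [L2_uSeq n, mu0_uSeq n]
    have hs0 : (0:ℝ) ≤ ∑ k ∈ Finset.Icc 1 n, (1:ℝ)/(k:ℝ)^2 :=
      Finset.sum_nonneg (fun k _ => by positivity)
    have hs2 := sum_inv_sq_le n
    apply Real.rpow_le_one (by positivity) ?_ (by norm_num)
    simp only [norm_zero]
    rw [show ((0:ℝ))^2 = 0 by norm_num, add_zero]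
    linarith
  · have heq : (fun n : ℕ => ‖mu1 (uSeq n)‖)
        = fun n : ℕ => ∑ i ∈ Finset.range n, (1 / ((i:ℝ) + 1)) := by
      funext n
      rw [mu1_uSeq n, Complex.norm_real, Real.norm_eq_abs,
        abs_of_nonneg (Finset.sum_nonneg (fun k _ => by positivity))]
      rw [← Finset.Ico_add_one_right_eq_Icc, Finset.sum_Ico_eq_sum_range]
      simp [add_comm]
    rw [heq]
    exact Real.tendsto_sum_range_one_div_nat_succ_atTop
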